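/- Consider a sequence of subsets p⁽⁰⁾, p⁽¹⁾, ..., p⁽ᴸ⁾ of {1,...,m}, each of size n, such that each p⁽ᵗ⁺¹⁾ is obtained from p⁽ᵗ⁾ by removing one element and adding a strictly larger element not in p⁽ᵗ⁾, and no ordered pair (removed, added) is used twice across the sequence. Then L ≤ h·m − h(h+1)/2 where h = ⌈√(2n−1)⌉, provided n ≤ m − n; more generally L ≤ h·m − h(h+1)/2 with h = ⌈√(2·min{n,m−n}−1)⌉. -/

import Mathlib

open Finset in
private lemma aux_sum_range_le_sum_nat (s : Finset ℕ) :
    ∑ i ∈ range s.card, i ≤ ∑ x ∈ s, x := by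
  induction s using Finset.strongInduction with
  | _ s ih =>
    rcases s.eq_empty_or_nonempty with rfl | hs
    · simp
    · have hM : s.max' hs ∈ s := s.max'_mem hs
      have hcard_le : s.card ≤ s.max' hs + 1 := by
        have hsub : s ⊆ range (s.max' hs + 1) := fun x hx =>
          mem_range.2 (Nat.lt_succ_of_le (s.le_max' x hx))
        simpa using Finset.card_le_card hsub
      have IH := ih (s.erase (s.max' hs)) (Finset.erase_ssubset hM)
      have hsum : s.max' hs + ∑ x ∈ s.erase (s.max' hs), x = ∑ x ∈ s, x :=
        Finset.add_sum_erase s id hM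
      have hc : s.card = (s.erase (s.max' hs)).card + 1 := by
        rw [Finset.card_erase_of_mem hM]
        have := Finset.card_pos.2 hs
        omega
      rw [hc, Finset.sum_range_succ]
      omega

open Finset in
private lemma aux_sum_range_le_sum_fin {m : ℕ} (s : Finset (Fin m)) :
    ∑ i ∈ range s.card, i ≤ ∑ e ∈ s, (e : ℕ) := by
  have key := aux_sum_range_le_sum_nat (s.image (fun e : Fin m => (e : ℕ)))
  rwa [Finset.card_image_of_injective _ Fin.val_injective,
      Finset.sum_image (fun a _ b _ hab => Fin.val_injective hab)] at key

open Finset in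
private lemma aux_gauss_split (n q : ℕ) :
    ∑ i ∈ range (n + q), i = ∑ i ∈ range n, i + ∑ i ∈ range q, i + n * q := by
  induction q with
  | zero => simp
  | succ q ih =>
    rw [show n + (q+1) = (n+q)+1 by omega, Finset.sum_range_succ, ih,
       Finset.sum_range_succ, Nat.mul_succ]
    omega

open Finset in
private lemma aux_sum_linsq (a m h : ℕ) :
    6 * ∑ l ∈ Icc 1 h, ((a:ℤ) - l) * ((m:ℤ) - l)
      = 6*a*m*h - 3*(a+m)*h*(h+1) + h*(h+1)*(2*h+1) := by
  induction h with
  | zero => simp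
  | succ h ih =>
    rw [Finset.sum_Icc_succ_top (by omega)]
    push_cast
    push_cast at ih
    linear_combination ih


open Finset in
private lemma aux_final (m n L h k : ℕ) (hnm : n ≤ m) (hk : k = min n (m - n)) (hk1 : 1 ≤ k)
    (h2km : 2 * k ≤ m) (hS : 2 * k ≤ h * (h + 1)) (hm1 : h + 1 ≤ m)
    (KEY : (h+1) * L ≤ n * (m - n) + ∑ l ∈ Icc 1 h, (h+1-l)*(m-l)) :
    L ≤ h * m - h * (h + 1) / 2 := by
  have hprod : n * (m - n) = k * (m - k) := by
    rcases Nat.le_total n (m - n) with hc | hc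
    · rw [hk, min_eq_left hc]
    · rw [hk, min_eq_right hc, show m - (m - n) = n by omega, mul_comm]
  rw [hprod] at KEY
  have hWcast : ((∑ l ∈ Icc 1 h, (h+1-l)*(m-l) : ℕ) : ℤ)
      = ∑ l ∈ Icc 1 h, ((h:ℤ)+1-l)*((m:ℤ)-l) := by
    rw [Nat.cast_sum]
    refine Finset.sum_congr rfl fun l hl => ?_
    have h1 : l ≤ h := (mem_Icc.1 hl).2
    rw [Nat.cast_mul, Nat.cast_sub (by omega : l ≤ h+1), Nat.cast_sub (by omega : l ≤ m)]
    push_cast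
    ring
  have hWval : 6 * ∑ l ∈ Icc 1 h, ((h:ℤ)+1-l)*((m:ℤ)-l)
      = 6*((h:ℤ)+1)*m*h - 3*(((h:ℤ)+1)+m)*h*(h+1) + h*(h+1)*(2*h+1) := by
    have := aux_sum_linsq (h+1) m h
    push_cast at this
    linarith
  have KEYZ : 6*((h:ℤ)+1)*L ≤ 6*((k:ℤ)*((m:ℤ)-k))
      + (6*((h:ℤ)+1)*m*h - 3*(((h:ℤ)+1)+m)*h*(h+1) + h*(h+1)*(2*h+1)) := by
    have c1 : ((h+1) * L : ℤ) ≤ (k * (m-k) : ℕ) + ((∑ l ∈ Icc 1 h, (h+1-l)*(m-l) : ℕ) : ℤ) := by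
      exact_mod_cast KEY
    rw [hWcast] at c1
    have c2 : ((k * (m - k) : ℕ) : ℤ) = (k:ℤ) * ((m:ℤ) - k) := by
      rw [Nat.cast_mul, Nat.cast_sub (by omega : k ≤ m)]
    rw [c2] at c1
    linarith [hWval]
  have heven : h * (h+1) / 2 * 2 = h * (h+1) :=
    Nat.div_mul_cancel (Nat.even_mul_succ_self h).two_dvd
  have hhm : h * (h+1) ≤ h * m := Nat.mul_le_mul_left _ hm1
  suffices h2L : 2 * L + h * (h+1) ≤ 2 * (h * m) by omega
  have goalZ : 2 * (L:ℤ) + (h:ℤ) * (h+1) ≤ 2 * ((h:ℤ) * m) := by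
    by_contra hcon
    push_neg at hcon
    obtain ⟨c, hc⟩ := (Nat.even_mul_succ_self h)
    have hcZ : (h:ℤ) * (h+1) = 2 * c := by
      have hcc : ((h * (h+1) : ℕ) : ℤ) = ((c + c : ℕ) : ℤ) :=
        congrArg (fun x : ℕ => (x : ℤ)) hc
      push_cast at hcc
      linarith
    have hA1 : (h:ℤ) * m + 1 ≤ (L:ℤ) + c := by
      rw [hcZ] at hcon
      have : (h:ℤ) * m < (L:ℤ) + c := by linarith
      omega
    have hSZ : 2 * (k:ℤ) ≤ (h:ℤ) * (h+1) := by exact_mod_cast hS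
    have hmZ : (h:ℤ) + 1 ≤ m := by exact_mod_cast hm1
    have hkZ : 1 ≤ (k:ℤ) := by exact_mod_cast hk1
    have h2kZ : 2 * (k:ℤ) ≤ m := by exact_mod_cast h2km
    nlinarith [mul_nonneg (by linarith : (0:ℤ) ≤ (m:ℤ) - h - 1)
        (by linarith : (0:ℤ) ≤ (h:ℤ)*(h+1) - 2*k),
      sq_nonneg (2*(k:ℤ) - h - 1), sq_nonneg ((k:ℤ) - h), hkZ]
  exact_mod_cast goalZ

/-- consider a sequence `p 0, p 1, ..., p L` of `n`-element subsets of
`{1,...,m}` (modelled as `Fin m`), where each `p (t+1)` is obtained from `p t` by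
removing one element and adding a strictly larger element not in `p t`, and no ordered
pair (removed, added) is used twice. Then `L ≤ h·m − h(h+1)/2` where
`h = ⌈√(2·min{n, m−n} − 1)⌉`. -/
theorem move_sequence_length_bound
    (m n L : ℕ) (p : ℕ → Finset (Fin m))
    (hcard : ∀ t ≤ L, (p t).card = n)
    (mv : ℕ → Fin m × Fin m)
    (hmv : ∀ t < L,
      (mv t).1 ∈ p t ∧ (mv t).2 ∉ p t ∧ (mv t).1 < (mv t).2 ∧
      p (t + 1) = insert (mv t).2 ((p t).erase (mv t).1))
    (hinj : ∀ t < L, ∀ t' < L, mv t = mv t' → t = t')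
    (h : ℕ) (hh : h = ⌈Real.sqrt (2 * (min n (m - n) : ℝ) - 1)⌉₊) :
    L ≤ h * m - h * (h + 1) / 2 := by
  open Finset in
  have hnm : n ≤ m := by
    have := hcard L le_rfl
    calc n = (p L).card := this.symm
    _ ≤ m := by simpa using Finset.card_le_univ (p L)
  set k := min n (m - n) with hk
  by_cases hk0 : k = 0
  · -- degenerate case: L = 0
    have hL : L = 0 := by
      by_contra hL
      have hL1 : 0 < L := Nat.pos_of_ne_zero hL
      obtain ⟨h1, h2, _, _⟩ := hmv 0 hL1
      have hc0 : (p 0).card = n := hcard 0 (by omega)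
      rcases Nat.min_eq_zero_iff.1 hk0 with hn | hq
      · rw [hn, Finset.card_eq_zero] at hc0
        rw [hc0] at h1; simp at h1
      · have hnm' : n = m := by omega
        have huniv : p 0 = Finset.univ :=
          Finset.eq_univ_of_card _ (by rw [hc0, hnm', Fintype.card_fin])
        exact h2 (huniv ▸ Finset.mem_univ _)
    simp [hL]
  · -- main case
    have hk1 : 1 ≤ k := Nat.one_le_iff_ne_zero.2 hk0
    have h2km : 2 * k ≤ m := by omega
    have hcast : (min (n:ℝ) ((m:ℝ) - n)) = (k:ℝ) := by
      rw [← Nat.cast_sub hnm, ← Nat.cast_min, hk]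
    rw [hcast] at hh
    have hx0 : (0:ℝ) ≤ 2*(k:ℝ) - 1 := by
      have : (1:ℝ) ≤ (k:ℝ) := by exact_mod_cast hk1
      linarith
    have hle : Real.sqrt (2*(k:ℝ)-1) ≤ (h:ℝ) := hh ▸ Nat.le_ceil _
    have hsq : 2*(k:ℝ) - 1 ≤ (h:ℝ)^2 := by
      have h1 : (Real.sqrt (2*(k:ℝ)-1))^2 ≤ (h:ℝ)^2 :=
        pow_le_pow_left₀ (Real.sqrt_nonneg _) hle 2
      rwa [Real.sq_sqrt hx0] at h1
    have h2k : 2 * k ≤ h * h + 1 := by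
      have : (2*(k:ℝ)) ≤ (h:ℝ)^2 + 1 := by linarith
      exact_mod_cast (by push_cast; nlinarith : ((2*k : ℕ) : ℝ) ≤ ((h*h+1 : ℕ) : ℝ))
    have hpos : 1 ≤ h := by
      rcases Nat.eq_zero_or_pos h with h0 | h1
      · subst h0; simp at h2k; omega
      · exact h1
    have hS : 2 * k ≤ h * (h + 1) := by
      have : h * (h+1) = h*h + h := by ring
      omega
    have hm1 : h + 1 ≤ m := by
      have hm2 : 2 ≤ m := by omega
      have key : Real.sqrt (2*(k:ℝ)-1) ≤ ((m - 1 : ℕ) : ℝ) := by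
        have e1 : (2*(k:ℝ)-1) ≤ ((m-1:ℕ):ℝ)^2 := by
          have e2 : ((2*k - 1 : ℕ):ℝ) ≤ ((m-1:ℕ):ℝ) := by
            exact_mod_cast Nat.cast_le.2 (by omega : 2*k-1 ≤ m-1)
          have e3 : (1:ℝ) ≤ ((m-1:ℕ):ℝ) := by
            exact_mod_cast Nat.one_le_cast.2 (show 1 ≤ m - 1 by omega)
          have e4 : ((2*k-1:ℕ):ℝ) = 2*(k:ℝ)-1 := by
            push_cast [Nat.cast_sub (by omega : 1 ≤ 2*k)]; ring
          nlinarith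
        calc Real.sqrt (2*(k:ℝ)-1) ≤ Real.sqrt (((m-1:ℕ):ℝ)^2) := Real.sqrt_le_sqrt e1
        _ = ((m-1:ℕ):ℝ) := Real.sqrt_sq (by positivity)
      have : h ≤ m - 1 := hh ▸ Nat.ceil_le.2 key
      omega
    -- combinatorial core
    set f : ℕ → ℕ := fun t => ∑ e ∈ p t, (e:ℕ) with hf
    set d : ℕ → ℕ := fun t => (mv t).2.val - (mv t).1.val with hd
    have step : ∀ t < L, f (t+1) = f t + d t ∧ 1 ≤ d t := by
      intro t ht
      obtain ⟨h1, h2, h3, h4⟩ := hmv t ht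
      have hab : (mv t).1.val < (mv t).2.val := h3
      have hbe : (mv t).2 ∉ (p t).erase (mv t).1 :=
        fun hmem => h2 (Finset.mem_of_mem_erase hmem)
      have e1 : f (t+1) = (mv t).2.val + ∑ e ∈ (p t).erase (mv t).1, (e:ℕ) := by
        rw [hf]; simp only [h4, Finset.sum_insert hbe]
      have e2 : (mv t).1.val + ∑ e ∈ (p t).erase (mv t).1, (e:ℕ) = f t :=
        Finset.add_sum_erase _ _ h1
      constructor
      · simp only [hd]; omega
      · simp only [hd]; omega
    have telescope : ∀ t, t ≤ L → f t = f 0 + ∑ i ∈ range t, d i := by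
      intro t
      induction t with
      | zero => simp
      | succ t ih =>
        intro ht
        rw [(step t (by omega)).1, ih (by omega), Finset.sum_range_succ]
        omega
    have hDle : ∑ i ∈ range L, d i ≤ n * (m - n) := by
      have b0 : ∑ i ∈ range n, i ≤ f 0 := by
        have := aux_sum_range_le_sum_fin (p 0)
        rwa [hcard 0 (by omega)] at this
      have hcompl : ((p L)ᶜ).card = m - n := by
        rw [Finset.card_compl, hcard L le_rfl, Fintype.card_fin]
      have b1 : ∑ i ∈ range (m-n), i ≤ ∑ e ∈ (p L)ᶜ, (e:ℕ) := by
        have := aux_sum_range_le_sum_fin ((p L)ᶜ)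
        rwa [hcompl] at this
      have b2 : f L + ∑ e ∈ (p L)ᶜ, (e:ℕ) = ∑ e : Fin m, (e:ℕ) :=
        Finset.sum_add_sum_compl (p L) _
      have b3 : ∑ e : Fin m, (e:ℕ) = ∑ i ∈ range m, i :=
        Fin.sum_univ_eq_sum_range (fun i => (i:ℕ)) m
      have b4 := aux_gauss_split n (m - n)
      rw [show n + (m-n) = m by omega] at b4
      have b5 := telescope L le_rfl
      omega
    have fiber : ∀ l, ((range L).filter (fun t => d t = l)).card ≤ m - l := by
      intro l
      have : ((range L).filter (fun t => d t = l)).card ≤ (range (m - l)).card := by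
        apply Finset.card_le_card_of_injOn (fun t => (mv t).1.val)
        · intro t ht
          simp only [coe_filter, Set.mem_setOf_eq, mem_coe, mem_filter, mem_range] at ht ⊢
          obtain ⟨htL, htl⟩ := ht
          obtain ⟨_, _, h3, _⟩ := hmv t htL
          have hab : (mv t).1.val < (mv t).2.val := h3
          have hbm : (mv t).2.val < m := (mv t).2.isLt
          simp only [hd] at htl
          omega
        · intro t ht t' ht' heq
          simp only [coe_filter, Set.mem_setOf_eq, mem_range] at ht ht'
          obtain ⟨htL, htl⟩ := ht
          obtain ⟨htL', htl'⟩ := ht'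
          have hab := (hmv t htL).2.2.1
          have hab' := (hmv t' htL').2.2.1
          have e1 : (mv t).1 = (mv t').1 := Fin.val_injective heq
          have e2 : (mv t).2 = (mv t').2 := by
            apply Fin.val_injective
            have b1 : (mv t).1.val < (mv t).2.val := hab
            have b1' : (mv t').1.val < (mv t').2.val := hab'
            simp only [hd] at htl htl'
            omega
          exact hinj t htL t' htL' (Prod.ext e1 e2)
      simpa using this
    have count : (h+1) * L ≤ ∑ i ∈ range L, d i + ∑ t ∈ range L, (h + 1 - d t) := by
      calc (h+1) * L = ∑ _t ∈ range L, (h+1) := by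
            rw [Finset.sum_const, card_range, smul_eq_mul, mul_comm]
      _ ≤ ∑ t ∈ range L, (d t + (h + 1 - d t)) :=
            Finset.sum_le_sum (fun t _ => by omega)
      _ = ∑ i ∈ range L, d i + ∑ t ∈ range L, (h + 1 - d t) :=
            Finset.sum_add_distrib
    have Wle : ∑ t ∈ range L, (h + 1 - d t) ≤ ∑ l ∈ Icc 1 h, (h+1-l)*(m-l) := by
      have e1 : ∑ t ∈ (range L).filter (fun t => d t ∈ Icc 1 h), (h+1-d t)
          = ∑ t ∈ range L, (h+1-d t) := by
        apply Finset.sum_filter_of_ne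
        intro t ht hne
        have h1 := (step t (mem_range.1 ht)).2
        simp only [mem_Icc]
        omega
      have e2 : ∑ l ∈ Icc 1 h,
          ∑ t ∈ ((range L).filter (fun t => d t ∈ Icc 1 h)).filter (fun t => d t = l),
            (h+1-d t)
          = ∑ t ∈ (range L).filter (fun t => d t ∈ Icc 1 h), (h+1-d t) :=
        Finset.sum_fiberwise_of_maps_to (fun t ht => (mem_filter.1 ht).2) _
      rw [← e1, ← e2]
      apply Finset.sum_le_sum
      intro l hl
      have e3 : ∑ t ∈ ((range L).filter (fun t => d t ∈ Icc 1 h)).filter (fun t => d t = l),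
          (h+1-d t)
          = ((((range L).filter (fun t => d t ∈ Icc 1 h)).filter (fun t => d t = l)).card)
            * (h+1-l) := by
        rw [Finset.sum_congr rfl (fun t ht => by rw [(mem_filter.1 ht).2]),
          Finset.sum_const, smul_eq_mul]
      rw [e3]
      have e4 : (((range L).filter (fun t => d t ∈ Icc 1 h)).filter (fun t => d t = l)).card
          ≤ m - l := by
        refine le_trans (Finset.card_le_card ?_) (fiber l)
        intro x hx
        simp only [mem_filter] at hx ⊢
        exact ⟨hx.1.1, hx.2⟩
      calc _ ≤ (m - l) * (h+1-l) := Nat.mul_le_mul_right _ e4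
      _ = (h+1-l)*(m-l) := mul_comm _ _
    have KEY : (h+1) * L ≤ n * (m - n) + ∑ l ∈ Icc 1 h, (h+1-l)*(m-l) := by omega
    exact aux_final m n L h k hnm hk hk1 h2km hS hm1 KEY
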